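/- For every (n+1)×(n+1) matrix M over F_q and every field automorphism σ of F_q, the weight of the codeword c_M satisfies wt(c_M) = q^{n−1}·(q^{n+1}−1)/(q−1) − q^{n−1}·θ_M. In particular the spectrum of weights of C(Λ_σ) is { q^{n−1}(q^{n+1}−1)/(q−1) − q^{n−1}θ_M : M an (n+1)×(n+1) matrix over F_q }. -/

import Mathlib

open Matrix

/-- `theta σ M` : the number of projective points `[ξ]` (ξ a nonzero row vector) such that
`ξ·M = λ·ξ^σ` for some `λ ∈ F`. -/
noncomputable def theta {F : Type} [Field F] [Fintype F] {n : ℕ}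
    (σ : F ≃+* F) (M : Matrix (Fin (n + 1)) (Fin (n + 1)) F) : ℕ :=
  Nat.card {ξ : Projectivization F (Fin (n + 1) → F) //
    ∃ l : F, ξ.rep ᵥ* M = l • (fun i => σ (ξ.rep i))}

/-- `wt σ M` : the Hamming weight of the codeword `c_M` of `C(Λ_σ)`, i.e. the number of
pairs of projective points `([x],[ξ])` with `ξ·x = 0` and `ξ·M·x^σ ≠ 0`. -/
noncomputable def wt {F : Type} [Field F] [Fintype F] {n : ℕ}
    (σ : F ≃+* F) (M : Matrix (Fin (n + 1)) (Fin (n + 1)) F) : ℕ :=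
  Nat.card {pq : Projectivization F (Fin (n + 1) → F) × Projectivization F (Fin (n + 1) → F) //
    pq.2.rep ⬝ᵥ pq.1.rep = 0 ∧ (pq.2.rep ᵥ* M) ⬝ᵥ (fun i => σ (pq.1.rep i)) ≠ 0}



set_option linter.unusedSectionVars false

section Helpers

variable {F : Type} [Field F] [Fintype F]

section Lift

variable {V : Type*} [AddCommGroup V] [Module F V]

lemma unit_smul_cancel {w : V} (hw : w ≠ 0) {a b : Fˣ} (h : a • w = b • w) : a = b := by
  ext
  have h' : ((a : F) - (b : F)) • w = 0 := by
    rw [sub_smul, Units.smul_def, Units.smul_def] at *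
    rw [h, sub_self]
  rcases smul_eq_zero.mp h' with h1 | h1
  · exact sub_eq_zero.mp h1
  · exact absurd h1 hw

noncomputable def liftEquiv (C : V → Prop) (hC : ∀ (a : Fˣ) (v : V), C v → C (a • v)) :
    {v : V // v ≠ 0 ∧ C v} ≃ {p : Projectivization F V // C p.rep} × Fˣ where
  toFun v :=
    (⟨Projectivization.mk F v.1 v.2.1, by
        obtain ⟨a, ha⟩ := Projectivization.exists_smul_eq_mk_rep F v.1 v.2.1
        rw [← ha]; exact hC a v.1 v.2.2⟩,
      (Classical.choose (Projectivization.exists_smul_eq_mk_rep F v.1 v.2.1))⁻¹)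
  invFun pu := ⟨pu.2 • pu.1.1.rep,
    ⟨by simp [Projectivization.rep_nonzero pu.1.1, Units.smul_def],
      hC pu.2 _ pu.1.2⟩⟩
  left_inv v := Subtype.ext (by
    dsimp only
    exact ((congrArg (fun z => (Classical.choose
        (Projectivization.exists_smul_eq_mk_rep F v.1 v.2.1))⁻¹ • z)
      (Classical.choose_spec
        (Projectivization.exists_smul_eq_mk_rep F v.1 v.2.1))).symm).trans (inv_smul_smul _ v.1))
  right_inv := by
    rintro ⟨⟨p, hp⟩, u⟩
    have hne : u • p.rep ≠ 0 := by simp [Projectivization.rep_nonzero p, Units.smul_def]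
    have hmk : Projectivization.mk F (u • p.rep) hne = p := by
      conv_rhs => rw [← Projectivization.mk_rep p]
      exact (Projectivization.mk_eq_mk_iff F _ _ hne (Projectivization.rep_nonzero p)).mpr ⟨u, rfl⟩
    have hspec := Classical.choose_spec (Projectivization.exists_smul_eq_mk_rep F (u • p.rep) hne)
    set a := Classical.choose (Projectivization.exists_smul_eq_mk_rep F (u • p.rep) hne) with ha
    have hrep : (Projectivization.mk F (u • p.rep) hne).rep = p.rep := by rw [hmk]
    have hau : a * u = 1 := by
      apply unit_smul_cancel (w := p.rep) (Projectivization.rep_nonzero p)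
      rw [← smul_smul]
      rw [hrep] at hspec
      simpa using hspec
    have : a⁻¹ = u := by
      rw [← mul_one a⁻¹, ← hau, ← mul_assoc, inv_mul_cancel, one_mul]
    dsimp only
    exact Prod.ext (Subtype.ext hmk) this

lemma card_lift (C : V → Prop) (hC : ∀ (a : Fˣ) (v : V), C v → C (a • v)) :
    Nat.card {v : V // v ≠ 0 ∧ C v} = Nat.card {p : Projectivization F V // C p.rep} * (Fintype.card F - 1) := by
  rw [Nat.card_congr (liftEquiv C hC), Nat.card_prod, Nat.card_units,
    Nat.card_eq_fintype_card (α := F)]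

noncomputable def liftEquiv2 {W : Type*} [AddCommGroup W] [Module F W]
    (C : V → W → Prop)
    (hC : ∀ (a b : Fˣ) (v : V) (w : W), C v w → C (a • v) (b • w)) :
    {vw : V × W // vw.1 ≠ 0 ∧ vw.2 ≠ 0 ∧ C vw.1 vw.2} ≃
      {pq : Projectivization F V × Projectivization F W // C pq.1.rep pq.2.rep} × (Fˣ × Fˣ) where
  toFun v :=
    (⟨(Projectivization.mk F v.1.1 v.2.1, Projectivization.mk F v.1.2 v.2.2.1), by
        obtain ⟨a, ha⟩ := Projectivization.exists_smul_eq_mk_rep F v.1.1 v.2.1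
        obtain ⟨b, hb⟩ := Projectivization.exists_smul_eq_mk_rep F v.1.2 v.2.2.1
        dsimp only
        rw [← ha, ← hb]; exact hC a b v.1.1 v.1.2 v.2.2.2⟩,
      ((Classical.choose (Projectivization.exists_smul_eq_mk_rep F v.1.1 v.2.1))⁻¹,
       (Classical.choose (Projectivization.exists_smul_eq_mk_rep F v.1.2 v.2.2.1))⁻¹))
  invFun pu := ⟨(pu.2.1 • pu.1.1.1.rep, pu.2.2 • pu.1.1.2.rep),
    ⟨by simp [Projectivization.rep_nonzero, Units.smul_def],
     by simp [Projectivization.rep_nonzero, Units.smul_def],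
     hC pu.2.1 pu.2.2 _ _ pu.1.2⟩⟩
  left_inv v := Subtype.ext (by
    dsimp only
    refine Prod.ext ?_ ?_ <;> dsimp only
    · exact ((congrArg (fun z => (Classical.choose
          (Projectivization.exists_smul_eq_mk_rep F v.1.1 v.2.1))⁻¹ • z)
        (Classical.choose_spec
          (Projectivization.exists_smul_eq_mk_rep F v.1.1 v.2.1))).symm).trans
        (inv_smul_smul _ v.1.1)
    · exact ((congrArg (fun z => (Classical.choose
          (Projectivization.exists_smul_eq_mk_rep F v.1.2 v.2.2.1))⁻¹ • z)
        (Classical.choose_spec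
          (Projectivization.exists_smul_eq_mk_rep F v.1.2 v.2.2.1))).symm).trans
        (inv_smul_smul _ v.1.2))
  right_inv := by
    rintro ⟨⟨⟨p, p'⟩, hp⟩, u, u'⟩
    have hne : u • p.rep ≠ 0 := by simp [Projectivization.rep_nonzero p, Units.smul_def]
    have hne' : u' • p'.rep ≠ 0 := by simp [Projectivization.rep_nonzero p', Units.smul_def]
    have hmk : Projectivization.mk F (u • p.rep) hne = p := by
      conv_rhs => rw [← Projectivization.mk_rep p]
      exact (Projectivization.mk_eq_mk_iff F _ _ hne (Projectivization.rep_nonzero p)).mpr ⟨u, rfl⟩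
    have hmk' : Projectivization.mk F (u' • p'.rep) hne' = p' := by
      conv_rhs => rw [← Projectivization.mk_rep p']
      exact (Projectivization.mk_eq_mk_iff F _ _ hne' (Projectivization.rep_nonzero p')).mpr
        ⟨u', rfl⟩
    have hspec := Classical.choose_spec (Projectivization.exists_smul_eq_mk_rep F (u • p.rep) hne)
    have hspec' := Classical.choose_spec
      (Projectivization.exists_smul_eq_mk_rep F (u' • p'.rep) hne')
    set a := Classical.choose (Projectivization.exists_smul_eq_mk_rep F (u • p.rep) hne)
    set a' := Classical.choose (Projectivization.exists_smul_eq_mk_rep F (u' • p'.rep) hne')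
    have hrep : (Projectivization.mk F (u • p.rep) hne).rep = p.rep := by rw [hmk]
    have hrep' : (Projectivization.mk F (u' • p'.rep) hne').rep = p'.rep := by rw [hmk']
    have hau : a * u = 1 := by
      apply unit_smul_cancel (w := p.rep) (Projectivization.rep_nonzero p)
      rw [← smul_smul]
      rw [hrep] at hspec
      simpa using hspec
    have hau' : a' * u' = 1 := by
      apply unit_smul_cancel (w := p'.rep) (Projectivization.rep_nonzero p')
      rw [← smul_smul]
      rw [hrep'] at hspec'
      simpa using hspec'
    have h1 : a⁻¹ = u := by rw [← mul_one a⁻¹, ← hau, ← mul_assoc, inv_mul_cancel, one_mul]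
    have h1' : a'⁻¹ = u' := by rw [← mul_one a'⁻¹, ← hau', ← mul_assoc, inv_mul_cancel, one_mul]
    dsimp only
    exact Prod.ext (Subtype.ext (Prod.ext hmk hmk')) (Prod.ext h1 h1')

lemma card_lift2 {W : Type*} [AddCommGroup W] [Module F W] (C : V → W → Prop)
    (hC : ∀ (a b : Fˣ) (v : V) (w : W), C v w → C (a • v) (b • w)) :
    Nat.card {vw : V × W // vw.1 ≠ 0 ∧ vw.2 ≠ 0 ∧ C vw.1 vw.2} =
      Nat.card {pq : Projectivization F V × Projectivization F W // C pq.1.rep pq.2.rep} *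
        ((Fintype.card F - 1) * (Fintype.card F - 1)) := by
  rw [Nat.card_congr (liftEquiv2 C hC), Nat.card_prod, Nat.card_prod, Nat.card_units,
    Nat.card_eq_fintype_card (α := F)]

end Lift

section Count

variable {W : Type*} [AddCommGroup W] [Module F W]

lemma surjective_of_ne_zero (f : W →ₗ[F] F) (hf : f ≠ 0) : Function.Surjective f := by
  obtain ⟨w, hw⟩ := DFunLike.ne_iff.mp hf
  have hw' : f w ≠ 0 := by simpa using hw
  intro c
  refine ⟨(c * (f w)⁻¹) • w, ?_⟩
  rw [_root_.map_smul, smul_eq_mul, mul_assoc, inv_mul_cancel₀ hw', mul_one]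

lemma finrank_ker_eq [FiniteDimensional F W] (f : W →ₗ[F] F) (hf : f ≠ 0) :
    Module.finrank F (LinearMap.ker f) = Module.finrank F W - 1 := by
  have h := LinearMap.finrank_range_add_finrank_ker f
  rw [LinearMap.range_eq_top.mpr (surjective_of_ne_zero f hf), finrank_top,
    Module.finrank_self] at h
  omega

lemma card_ker_eq [Finite W] [FiniteDimensional F W] (f : W →ₗ[F] F) (hf : f ≠ 0) :
    Nat.card (LinearMap.ker f) = Fintype.card F ^ (Module.finrank F W - 1) := by
  have : Fintype (LinearMap.ker f) := Fintype.ofFinite _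
  rw [Nat.card_eq_fintype_card, Module.card_eq_pow_finrank (K := F), finrank_ker_eq f hf]

lemma card_W_eq [Finite W] [FiniteDimensional F W] :
    Nat.card W = Fintype.card F ^ Module.finrank F W := by
  have : Fintype W := Fintype.ofFinite _
  rw [Nat.card_eq_fintype_card, Module.card_eq_pow_finrank (K := F)]

lemma card_ne_zero_eq [Finite W] [FiniteDimensional F W] (f : W →ₗ[F] F) (hf : f ≠ 0) :
    Nat.card {w : W // f w ≠ 0} =
      Fintype.card F ^ Module.finrank F W - Fintype.card F ^ (Module.finrank F W - 1) := by
  classical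
  have : Fintype W := Fintype.ofFinite _
  have h1 : Nat.card {w : W // f w = 0} = Fintype.card F ^ (Module.finrank F W - 1) := by
    rw [← card_ker_eq f hf]
    exact Nat.card_congr (Equiv.subtypeEquivRight (fun w => by simp [LinearMap.mem_ker]))
  have h2 : Nat.card {w : W // f w ≠ 0} = Nat.card W - Nat.card {w : W // f w = 0} := by
    simp only [Nat.card_eq_fintype_card]
    exact Fintype.card_subtype_compl _
  rw [h2, h1, card_W_eq (F := F)]

end Count

section Dot

variable {m : ℕ}

noncomputable def dotLin (ξ : Fin m → F) : (Fin m → F) →ₗ[F] F where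
  toFun x := ξ ⬝ᵥ x
  map_add' _ _ := by simp [dotProduct_add]
  map_smul' _ _ := by simp [dotProduct_smul]

lemma dotLin_ne_zero {ξ : Fin m → F} (hξ : ξ ≠ 0) : dotLin ξ ≠ 0 := by
  obtain ⟨i, hi⟩ := Function.ne_iff.mp hξ
  have hi' : ξ i ≠ 0 := by simpa using hi
  exact DFunLike.ne_iff.mpr ⟨Pi.single i 1, by
    simpa [dotLin, dotProduct_single] using hi'⟩

lemma exists_smul_of_ker_sub {ξ η : Fin m → F} (hξ : ξ ≠ 0)
    (h : ∀ x, ξ ⬝ᵥ x = 0 → η ⬝ᵥ x = 0) : ∃ c : F, η = c • ξ := by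
  obtain ⟨i, hi⟩ := Function.ne_iff.mp hξ
  have hi' : ξ i ≠ 0 := by simpa using hi
  refine ⟨η i / ξ i, funext fun j => ?_⟩
  have hx : ξ ⬝ᵥ ((Pi.single j (1:F) : Fin m → F) - (ξ j / ξ i) • (Pi.single i (1:F) : Fin m → F)) = 0 := by
    simp only [dotProduct_sub, dotProduct_smul, dotProduct_single,
      mul_one, smul_eq_mul]
    field_simp
    simp
  have h2 := h _ hx
  simp only [dotProduct_sub, dotProduct_smul, dotProduct_single,
    mul_one, smul_eq_mul, sub_eq_zero] at h2
  rw [Pi.smul_apply, smul_eq_mul]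
  rw [h2]
  field_simp

lemma fiber_count {ξ η : Fin m → F} (hξ : ξ ≠ 0) (hno : ¬ ∃ c : F, η = c • ξ) :
    Nat.card {x : Fin m → F // ξ ⬝ᵥ x = 0 ∧ η ⬝ᵥ x ≠ 0} =
      Fintype.card F ^ (m - 1) - Fintype.card F ^ (m - 1 - 1) := by
  have hg : (dotLin η).comp (LinearMap.ker (dotLin ξ)).subtype ≠ 0 := by
    intro h0
    apply hno
    apply exists_smul_of_ker_sub hξ
    intro x hx
    have : ((dotLin η).comp (LinearMap.ker (dotLin ξ)).subtype)
        ⟨x, LinearMap.mem_ker.mpr hx⟩ = 0 := by rw [h0]; rfl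
    exact this
  have e : {x : Fin m → F // ξ ⬝ᵥ x = 0 ∧ η ⬝ᵥ x ≠ 0} ≃
      {y : LinearMap.ker (dotLin ξ) //
        ((dotLin η).comp (LinearMap.ker (dotLin ξ)).subtype) y ≠ 0} :=
    { toFun := fun x => ⟨⟨x.1, LinearMap.mem_ker.mpr x.2.1⟩, x.2.2⟩
      invFun := fun y => ⟨y.1.1, ⟨LinearMap.mem_ker.mp y.1.2, y.2⟩⟩
      left_inv := fun x => rfl
      right_inv := fun y => rfl }
  rw [Nat.card_congr e, card_ne_zero_eq _ hg,
    finrank_ker_eq (dotLin ξ) (dotLin_ne_zero hξ), Module.finrank_fin_fun]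

end Dot

end Helpers

theorem stmt_3 (F : Type) [Field F] [Fintype F] (n : ℕ) (hn : 2 ≤ n)
    (σ : F ≃+* F) (M : Matrix (Fin (n + 1)) (Fin (n + 1)) F) :
    wt σ M = (Fintype.card F) ^ (n - 1) * (((Fintype.card F) ^ (n + 1) - 1) / ((Fintype.card F) - 1))
        - (Fintype.card F) ^ (n - 1) * theta σ M := by
  classical
  set q := Fintype.card F with hq
  have hq2 : 2 ≤ q := Fintype.one_lt_card
  have hσ0 : ∀ y : F, σ y = 0 ↔ y = 0 := fun y =>
    ⟨fun h => by simpa using congrArg σ.symm h, fun h => by simp [h]⟩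
  set Θ : (Fin (n + 1) → F) → Prop :=
    fun ξ => ∃ l : F, ξ ᵥ* M = l • (fun i => σ (ξ i)) with hΘdef
  set C : (Fin (n + 1) → F) → (Fin (n + 1) → F) → Prop :=
    fun x ξ => ξ ⬝ᵥ x = 0 ∧ (ξ ᵥ* M) ⬝ᵥ (fun i => σ (x i)) ≠ 0 with hCdef
  -- invariance of Θ
  have hΘinv : ∀ (a : Fˣ) (ξ : Fin (n + 1) → F), Θ ξ → Θ (a • ξ) := by
    rintro a ξ ⟨l, hl⟩
    refine ⟨(a : F) * l * (σ (a : F))⁻¹, ?_⟩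
    have ha : σ (a : F) ≠ 0 := fun h => a.ne_zero ((hσ0 _).mp h)
    funext i
    have : ((a • ξ) ᵥ* M) = (a : F) • (ξ ᵥ* M) := by
      rw [show (a • ξ : Fin (n+1) → F) = (a : F) • ξ from rfl, Matrix.smul_vecMul]
    rw [this, hl]
    simp only [Pi.smul_apply, smul_eq_mul, Units.smul_def, _root_.map_mul]
    field_simp
  -- invariance of C
  have hCinv : ∀ (a b : Fˣ) (x ξ : Fin (n + 1) → F), C x ξ → C (a • x) (b • ξ) := by
    rintro a b x ξ ⟨h1, h2⟩
    have ha : σ (a : F) ≠ 0 := fun h => a.ne_zero ((hσ0 _).mp h)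
    constructor
    · rw [show (b • ξ : Fin (n+1) → F) = (b : F) • ξ from rfl,
        show (a • x : Fin (n+1) → F) = (a : F) • x from rfl,
        smul_dotProduct, dotProduct_smul, h1]
      simp
    · have hb : ((b • ξ) ᵥ* M) = (b : F) • (ξ ᵥ* M) := by
        rw [show (b • ξ : Fin (n+1) → F) = (b : F) • ξ from rfl, Matrix.smul_vecMul]
      have hax : (fun i => σ ((a • x) i)) = σ (a : F) • (fun i => σ (x i)) := by
        funext i
        simp [Units.smul_def, _root_.map_mul]
      rw [hb, hax, smul_dotProduct, dotProduct_smul, smul_eq_mul, smul_eq_mul]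
      exact mul_ne_zero b.ne_zero (mul_ne_zero ha h2)
  -- step 1 : theta
  have hT : Nat.card {ξ : Fin (n + 1) → F // ξ ≠ 0 ∧ Θ ξ} = theta σ M * (q - 1) := by
    rw [card_lift Θ hΘinv]
    rfl
  -- step 2 : wt
  have hW : Nat.card {vw : (Fin (n + 1) → F) × (Fin (n + 1) → F) //
      vw.1 ≠ 0 ∧ vw.2 ≠ 0 ∧ C vw.1 vw.2} = wt σ M * ((q - 1) * (q - 1)) := by
    rw [card_lift2 C hCinv]
    rfl
  -- step 3 : the main count
  set T := Nat.card {ξ : Fin (n + 1) → F // ξ ≠ 0 ∧ Θ ξ} with hTdef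
  have key : Nat.card {vw : (Fin (n + 1) → F) × (Fin (n + 1) → F) //
      vw.1 ≠ 0 ∧ vw.2 ≠ 0 ∧ C vw.1 vw.2}
      = ((q ^ (n + 1) - 1) - T) * (q ^ n - q ^ (n - 1)) := by
    have e : {vw : (Fin (n + 1) → F) × (Fin (n + 1) → F) //
        vw.1 ≠ 0 ∧ vw.2 ≠ 0 ∧ C vw.1 vw.2} ≃
        Σ ξp : {ξ : Fin (n + 1) → F // ξ ≠ 0}, {x : Fin (n + 1) → F // C x ξp.1} :=
      { toFun := fun vw => ⟨⟨vw.1.2, vw.2.2.1⟩, ⟨vw.1.1, vw.2.2.2⟩⟩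
        invFun := fun s => ⟨(s.2.1, s.1.1),
          ⟨fun hx => s.2.2.2 (by
              rw [show (s.2.1 : Fin (n + 1) → F) = 0 from hx]; simp), s.1.2, s.2.2⟩⟩
        left_inv := fun vw => rfl
        right_inv := fun s => rfl }
    have hfib : ∀ ξp : {ξ : Fin (n + 1) → F // ξ ≠ 0},
        Nat.card {x : Fin (n + 1) → F // C x ξp.1} =
          if Θ ξp.1 then 0 else q ^ n - q ^ (n - 1) := by
      rintro ⟨ξ, hξ⟩
      set η : Fin (n + 1) → F := fun i => σ.symm ((ξ ᵥ* M) i) with hη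
      have hdot : ∀ x : Fin (n + 1) → F,
          (ξ ᵥ* M) ⬝ᵥ (fun i => σ (x i)) = σ (η ⬝ᵥ x) := by
        intro x
        simp only [dotProduct, hη, map_sum, _root_.map_mul, RingEquiv.apply_symm_apply]
      have hC' : ∀ x, C x ξ ↔ (ξ ⬝ᵥ x = 0 ∧ η ⬝ᵥ x ≠ 0) := by
        intro x
        rw [hCdef]
        simp only [hdot x]
        constructor
        · rintro ⟨u1, u2⟩; exact ⟨u1, fun h => u2 (by rw [h, map_zero])⟩
        · rintro ⟨u1, u2⟩; exact ⟨u1, fun h => u2 ((hσ0 _).mp h)⟩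
      have hΘ' : Θ ξ ↔ ∃ c : F, η = c • ξ := by
        rw [hΘdef]
        constructor
        · rintro ⟨l, hl⟩
          refine ⟨σ.symm l, funext fun i => ?_⟩
          have : (ξ ᵥ* M) i = l * σ (ξ i) := by rw [hl]; simp
          simp [hη, this, _root_.map_mul]
        · rintro ⟨c, hc⟩
          refine ⟨σ c, funext fun i => ?_⟩
          have : (ξ ᵥ* M) i = σ (η i) := by simp [hη]
          rw [this]
          simp only [hc]
          simp [_root_.map_mul]
      split_ifs with h
      · obtain ⟨c, hc⟩ := hΘ'.mp h
        have : IsEmpty {x : Fin (n + 1) → F // C x ξ} := by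
          refine ⟨fun x => ?_⟩
          obtain ⟨u1, u2⟩ := (hC' x.1).mp x.2
          apply u2
          rw [hc, smul_dotProduct, u1, smul_eq_mul, mul_zero]
        exact Nat.card_of_isEmpty
      · have := fiber_count (F := F) hξ (fun hc => h (hΘ'.mpr hc))
        rw [Nat.card_congr (Equiv.subtypeEquivRight hC'), this]
        simp only [Nat.add_sub_cancel, hq]
    -- sum it up
    haveI : ∀ ξp : {ξ : Fin (n + 1) → F // ξ ≠ 0},
        Fintype {x : Fin (n + 1) → F // C x ξp.1} := fun ξp => Fintype.ofFinite _
    rw [Nat.card_congr e, Nat.card_eq_fintype_card, Fintype.card_sigma]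
    have : ∀ ξp : {ξ : Fin (n + 1) → F // ξ ≠ 0},
        Fintype.card {x : Fin (n + 1) → F // C x ξp.1} =
          if Θ ξp.1 then 0 else q ^ n - q ^ (n - 1) := by
      intro ξp; rw [← Nat.card_eq_fintype_card]; exact hfib ξp
    rw [Finset.sum_congr rfl (fun ξp _ => this ξp), Finset.sum_ite, Finset.sum_const_zero,
      Finset.sum_const, zero_add, smul_eq_mul]
    congr 1
    have hcards : (Finset.univ.filter (fun ξp : {ξ : Fin (n + 1) → F // ξ ≠ 0} => Θ ξp.1)).card +
        (Finset.univ.filter (fun ξp : {ξ : Fin (n + 1) → F // ξ ≠ 0} => ¬ Θ ξp.1)).card =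
        Fintype.card {ξ : Fin (n + 1) → F // ξ ≠ 0} :=
      Finset.card_filter_add_card_filter_not _
    have hI : Fintype.card {ξ : Fin (n + 1) → F // ξ ≠ 0} = q ^ (n + 1) - 1 := by
      rw [← Nat.card_eq_fintype_card,
        Nat.card_congr (Equiv.subtypeEquivRight
          (fun ξ : Fin (n + 1) → F => Iff.rfl : ∀ ξ : Fin (n + 1) → F, ξ ≠ 0 ↔ ¬ ξ = 0)),
        Nat.card_eq_fintype_card, Fintype.card_subtype_compl,
        Fintype.card_subtype_eq (0 : Fin (n + 1) → F), Fintype.card_fun, Fintype.card_fin]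
    have hfil : (Finset.univ.filter
        (fun ξp : {ξ : Fin (n + 1) → F // ξ ≠ 0} => Θ ξp.1)).card = T := by
      rw [hTdef, ← Fintype.card_subtype]
      rw [← Nat.card_eq_fintype_card]
      exact (Nat.card_congr (Equiv.subtypeSubtypeEquivSubtypeInter
        (fun ξ : Fin (n + 1) → F => ξ ≠ 0) Θ))
    omega
  -- step 4 : arithmetic
  rw [hW] at key
  have hdvd : (q - 1) ∣ q ^ (n + 1) - 1 := by
    simpa using Nat.sub_dvd_pow_sub_pow q 1 (n + 1)
  have hA : (q ^ (n + 1) - 1) / (q - 1) * (q - 1) = q ^ (n + 1) - 1 :=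
    Nat.div_mul_cancel hdvd
  have hpow : q ^ n - q ^ (n - 1) = q ^ (n - 1) * (q - 1) := by
    have h1 : q ^ n = q ^ (n - 1) * q := by
      rw [← pow_succ]; congr 1; omega
    rw [h1, Nat.mul_sub, mul_one]
  have hq1 : 0 < q - 1 := by omega
  have key2 : wt σ M * (q - 1) = ((q ^ (n + 1) - 1) - T) * q ^ (n - 1) := by
    apply Nat.eq_of_mul_eq_mul_right hq1
    calc wt σ M * (q - 1) * (q - 1) = wt σ M * ((q - 1) * (q - 1)) := by ring
      _ = ((q ^ (n + 1) - 1) - T) * (q ^ n - q ^ (n - 1)) := key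
      _ = ((q ^ (n + 1) - 1) - T) * q ^ (n - 1) * (q - 1) := by rw [hpow]; ring
  apply Nat.eq_of_mul_eq_mul_right hq1
  rw [key2]
  conv_rhs => rw [Nat.sub_mul, mul_assoc, hA, mul_assoc, ← hT, ← Nat.mul_sub]
  rw [mul_comm]
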